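/- Let K be a regular cone, C₁ = {x ∈ K : c₁ᵀx ≥ c₁₀}, C₂ = {x ∈ K : c₂ᵀx ≥ c₂₀} with c₁₀, c₂₀ ∈ {0,±1}, C₁ ⊄ C₂, C₂ ⊄ C₁, both strictly feasible. If there exist β₁, β₂ ∈ ℝ such that c₁ − β₂c₂ ∈ K* and c₂ − β₁c₁ ∈ K*, then conv(C₁ ∪ C₂) is closed. -/

import Mathlib

open Set Filter Topology Metric Bornology

/-- Dot product on `Fin n → ℝ`. -/
def dot {n : ℕ} (c x : Fin n → ℝ) : ℝ := ∑ i, c i * x i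

/-- Dual cone of a set `K ⊆ ℝⁿ`. -/
def dualCone {n : ℕ} (K : Set (Fin n → ℝ)) : Set (Fin n → ℝ) :=
  {y | ∀ x ∈ K, 0 ≤ dot y x}

lemma dot_add_right {n : ℕ} (c x y : Fin n → ℝ) :
    dot c (x + y) = dot c x + dot c y := by
  simp [dot, mul_add, Finset.sum_add_distrib]

lemma dot_smul_right {n : ℕ} (c : Fin n → ℝ) (t : ℝ) (x : Fin n → ℝ) :
    dot c (t • x) = t * dot c x := by
  simp [dot, Finset.mul_sum, mul_left_comm]

lemma dot_sub_smul_left {n : ℕ} (a b : Fin n → ℝ) (t : ℝ) (x : Fin n → ℝ) :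
    dot (a - t • b) x = dot a x - t * dot b x := by
  simp [dot, sub_mul, Finset.sum_sub_distrib, Finset.mul_sum, mul_assoc]

lemma dot_continuous {n : ℕ} (c : Fin n → ℝ) : Continuous fun x : Fin n → ℝ => dot c x := by
  unfold dot
  exact continuous_finset_sum _ fun i _ => continuous_const.mul (continuous_apply i)

lemma aux_add_mem {n : ℕ} {K : Set (Fin n → ℝ)} (hKconv : Convex ℝ K)
    (hKcone : ∀ x ∈ K, ∀ t : ℝ, 0 ≤ t → t • x ∈ K)
    {x y : Fin n → ℝ} (hx : x ∈ K) (hy : y ∈ K) : x + y ∈ K := by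
  have h := hKconv hx hy (by norm_num : (0:ℝ) ≤ 1/2) (by norm_num : (0:ℝ) ≤ 1/2) (by norm_num)
  have h2 := hKcone _ h 2 (by norm_num)
  have : (2:ℝ) • ((1/2 : ℝ) • x + (1/2 : ℝ) • y) = x + y := by
    rw [smul_add, smul_smul, smul_smul]; norm_num
  rwa [this] at h2

lemma aux_bounded {n : ℕ} {K : Set (Fin n → ℝ)} (hKclosed : IsClosed K)
    (hKcone : ∀ x ∈ K, ∀ t : ℝ, 0 ≤ t → t • x ∈ K)
    (hKpointed : ∀ x, x ∈ K → -x ∈ K → x = 0)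
    (a b : ℕ → (Fin n → ℝ)) (ha : ∀ k, a k ∈ K) (hb : ∀ k, b k ∈ K)
    (C : ℝ) (hC : ∀ k, ‖a k + b k‖ ≤ C) :
    ∃ R, ∀ k, ‖a k‖ ≤ R := by
  by_contra hcon
  push_neg at hcon
  choose g hg using fun m : ℕ => hcon ((m : ℝ) + 1)
  -- hg : ∀ m, (m:ℝ)+1 < ‖a (g m)‖
  have hpos : ∀ m : ℕ, (0:ℝ) < ‖a (g m)‖ := fun m =>
    lt_of_lt_of_le (by positivity) (le_of_lt (hg m))
  set q : ℕ → (Fin n → ℝ) := fun m => ‖a (g m)‖⁻¹ • a (g m) with hq_def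
  have hq_sphere : ∀ m, q m ∈ sphere (0 : Fin n → ℝ) 1 := by
    intro m
    rw [mem_sphere_zero_iff_norm, hq_def, norm_smul, norm_inv, norm_norm,
      inv_mul_cancel₀ (ne_of_gt (hpos m))]
  obtain ⟨d, hd, φ, hφ, hqφ⟩ :=
    tendsto_subseq_of_bounded (isCompact_sphere (0 : Fin n → ℝ) 1).isBounded hq_sphere
  rw [closure_eq_iff_isClosed.mpr isClosed_sphere] at hd
  have hdnorm : ‖d‖ = 1 := mem_sphere_zero_iff_norm.mp hd
  have hdK : d ∈ K := by
    refine hKclosed.mem_of_tendsto hqφ (Eventually.of_forall fun m => ?_)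
    exact hKcone _ (ha _) _ (inv_nonneg.mpr (norm_nonneg _))
  -- the scaled sums tend to 0
  have hC0 : 0 ≤ C := le_trans (norm_nonneg _) (hC 0)
  have hsum0 : Tendsto (fun m => ‖a (g (φ m))‖⁻¹ • (a (g (φ m)) + b (g (φ m))))
      atTop (𝓝 0) := by
    refine squeeze_zero_norm (f := fun m => ‖a (g (φ m))‖⁻¹ • (a (g (φ m)) + b (g (φ m)))) (a := fun m => C * ((m : ℝ) + 1)⁻¹) (fun m => ?_) ?_
    · 
      rw [norm_smul, norm_inv, norm_norm, mul_comm]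
      have h1 : ((m : ℝ) + 1) ≤ ‖a (g (φ m))‖ := by
        have h0 : m ≤ φ m := hφ.le_apply
        have h1 : ((m:ℝ) + 1) ≤ ((φ m : ℝ) + 1) := by
          have : (m:ℝ) ≤ (φ m : ℝ) := Nat.cast_le.mpr h0
          linarith
        linarith [hg (φ m)]
      have h2 : ‖a (g (φ m))‖⁻¹ ≤ ((m : ℝ) + 1)⁻¹ :=
        inv_anti₀ (by positivity) h1
      exact mul_le_mul (hC _) h2 (inv_nonneg.mpr (norm_nonneg _)) hC0
    · have := tendsto_one_div_add_atTop_nhds_zero_nat (𝕜 := ℝ)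
      have h := this.const_mul C
      simpa [one_div] using h
  have hbK : Tendsto (fun m => ‖a (g (φ m))‖⁻¹ • b (g (φ m))) atTop (𝓝 (-d)) := by
    have heq : (fun m => ‖a (g (φ m))‖⁻¹ • b (g (φ m))) =
        fun m => ‖a (g (φ m))‖⁻¹ • (a (g (φ m)) + b (g (φ m))) - q (φ m) := by
      funext m
      rw [hq_def, smul_add]
      abel
    rw [heq]
    simpa using hsum0.sub hqφ
  have hndK : -d ∈ K := by
    refine hKclosed.mem_of_tendsto hbK (Eventually.of_forall fun m => ?_)
    exact hKcone _ (hb _) _ (inv_nonneg.mpr (norm_nonneg _))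
  have := hKpointed d hdK hndK
  rw [this, norm_zero] at hdnorm
  norm_num at hdnorm

lemma aux_key {n : ℕ} {K : Set (Fin n → ℝ)} (hKconv : Convex ℝ K)
    (hKcone : ∀ x ∈ K, ∀ t : ℝ, 0 ≤ t → t • x ∈ K)
    (c c' : Fin n → ℝ) (c₀ c₀' : ℝ) (C C' : Set (Fin n → ℝ))
    (hC : C = {x ∈ K | c₀ ≤ dot c x}) (hC' : C' = {x ∈ K | c₀' ≤ dot c' x})
    (β : ℝ) (hdual : c' - β • c ∈ dualCone K)
    {v u : Fin n → ℝ} (hv : v ∈ C') (hu : u ∈ K) (hcu : 0 ≤ dot c u) :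
    v + u ∈ convexHull ℝ (C ∪ C') := by
  rw [hC'] at hv
  obtain ⟨hvK, hvc⟩ := hv
  have ht : β * dot c u ≤ dot c' u := by
    have := hdual u hu
    rw [dot_sub_smul_left] at this
    linarith
  rcases le_or_gt 0 (dot c' u) with htpos | htneg
  · -- v + u ∈ C'
    apply subset_convexHull ℝ (C ∪ C')
    right
    rw [hC']
    refine ⟨aux_add_mem hKconv hKcone hvK hu, ?_⟩
    rw [dot_add_right]
    linarith
  · -- then dot c u > 0
    have hs : 0 < dot c u := by
      rcases lt_or_eq_of_le hcu with h | h
      · exact h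
      · exfalso; rw [← h] at ht; simp at ht; linarith
    set s := dot c u with hs_def
    set θ : ℝ := max 1 ((c₀ - dot c v) / s) with hθ_def
    have hθ1 : 1 ≤ θ := le_max_left _ _
    have hθ0 : 0 < θ := lt_of_lt_of_le one_pos hθ1
    have hwC : v + θ • u ∈ C := by
      rw [hC]
      refine ⟨aux_add_mem hKconv hKcone hvK (hKcone _ hu _ (le_of_lt hθ0)), ?_⟩
      rw [dot_add_right, dot_smul_right]
      have : (c₀ - dot c v) / s ≤ θ := le_max_right _ _
      have h2 : (c₀ - dot c v) / s * s ≤ θ * s := mul_le_mul_of_nonneg_right this (le_of_lt hs)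
      rw [div_mul_cancel₀ _ (ne_of_gt hs)] at h2
      linarith
    have hcomb : θ⁻¹ • (v + θ • u) + (1 - θ⁻¹) • v = v + u := by
      rw [smul_add, smul_smul, inv_mul_cancel₀ (ne_of_gt hθ0), one_smul, sub_smul, one_smul]
      abel
    rw [← hcomb]
    refine (convex_convexHull ℝ (C ∪ C')) ?_ ?_ (inv_nonneg.mpr (le_of_lt hθ0)) ?_ (by ring)
    · exact subset_convexHull ℝ _ (Or.inl hwC)
    · apply subset_convexHull ℝ _
      right; rw [hC']; exact ⟨hvK, hvc⟩
    · rw [sub_nonneg]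
      exact inv_le_one_of_one_le₀ hθ1

theorem stmt_17 {n : ℕ} (K : Set (Fin n → ℝ))
    (hKclosed : IsClosed K) (hKconv : Convex ℝ K)
    (hKcone : ∀ x ∈ K, ∀ t : ℝ, 0 ≤ t → t • x ∈ K)
    (hKpointed : ∀ x, x ∈ K → -x ∈ K → x = 0)
    (hKfull : (interior K).Nonempty)
    (c₁ c₂ : Fin n → ℝ) (c₁₀ c₂₀ : ℝ)
    (hc₁₀ : c₁₀ = 0 ∨ c₁₀ = 1 ∨ c₁₀ = -1)
    (hc₂₀ : c₂₀ = 0 ∨ c₂₀ = 1 ∨ c₂₀ = -1)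
    (C₁ C₂ : Set (Fin n → ℝ))
    (hC₁ : C₁ = {x ∈ K | c₁₀ ≤ dot c₁ x})
    (hC₂ : C₂ = {x ∈ K | c₂₀ ≤ dot c₂ x})
    (h12 : ¬ C₁ ⊆ C₂) (h21 : ¬ C₂ ⊆ C₁)
    (hsf₁ : (C₁ ∩ interior K).Nonempty)
    (hsf₂ : (C₂ ∩ interior K).Nonempty)
    (hβ : ∃ β₁ β₂ : ℝ, c₁ - β₂ • c₂ ∈ dualCone K ∧ c₂ - β₁ • c₁ ∈ dualCone K) :
    IsClosed (convexHull ℝ (C₁ ∪ C₂)) := by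
  obtain ⟨β₁, β₂, hdual₂, hdual₁⟩ := hβ
  -- basic structure of C₁, C₂
  have hC₁conv : Convex ℝ C₁ := by
    rw [hC₁]
    intro x hx y hy s t hs ht hst
    refine ⟨hKconv hx.1 hy.1 hs ht hst, ?_⟩
    rw [dot_add_right, dot_smul_right, dot_smul_right]
    have h1 := mul_le_mul_of_nonneg_left hx.2 hs
    have h2 := mul_le_mul_of_nonneg_left hy.2 ht
    have h3 : s * c₁₀ + t * c₁₀ = c₁₀ := by rw [← add_mul, hst, one_mul]
    linarith
  have hC₂conv : Convex ℝ C₂ := by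
    rw [hC₂]
    intro x hx y hy s t hs ht hst
    refine ⟨hKconv hx.1 hy.1 hs ht hst, ?_⟩
    rw [dot_add_right, dot_smul_right, dot_smul_right]
    have h1 := mul_le_mul_of_nonneg_left hx.2 hs
    have h2 := mul_le_mul_of_nonneg_left hy.2 ht
    have h3 : s * c₂₀ + t * c₂₀ = c₂₀ := by rw [← add_mul, hst, one_mul]
    linarith
  have hC₁closed : IsClosed C₁ := by
    rw [hC₁]
    exact hKclosed.inter (isClosed_le continuous_const (dot_continuous c₁))
  have hC₂closed : IsClosed C₂ := by
    rw [hC₂]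
    exact hKclosed.inter (isClosed_le continuous_const (dot_continuous c₂))
  have ne₁ : C₁.Nonempty := ⟨hsf₁.choose, hsf₁.choose_spec.1⟩
  have ne₂ : C₂.Nonempty := ⟨hsf₂.choose, hsf₂.choose_spec.1⟩
  -- sequential closedness
  apply IsSeqClosed.isClosed
  intro p z hp hz
  have hmem : ∀ k, ∃ x, x ∈ C₁ ∧ ∃ y, y ∈ C₂ ∧ ∃ s t : ℝ,
      0 ≤ s ∧ 0 ≤ t ∧ s + t = 1 ∧ s • x + t • y = p k := by
    intro k
    have h := hp k
    rw [hC₁conv.convexHull_union hC₂conv ne₁ ne₂, mem_convexJoin] at h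
    obtain ⟨x, hx, y, hy, s, t, hs, ht, hst, hxy⟩ := h
    exact ⟨x, hx, y, hy, s, t, hs, ht, hst, hxy⟩
  choose x hxC y hyC lam mu hlam hmu hlm hpk using hmem
  have hxK : ∀ k, x k ∈ K := fun k => by have := hxC k; rw [hC₁] at this; exact this.1
  have hyK : ∀ k, y k ∈ K := fun k => by have := hyC k; rw [hC₂] at this; exact this.1
  have hxdot : ∀ k, c₁₀ ≤ dot c₁ (x k) := fun k => by
    have := hxC k; rw [hC₁] at this; exact this.2
  have hydot : ∀ k, c₂₀ ≤ dot c₂ (y k) := fun k => by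
    have := hyC k; rw [hC₂] at this; exact this.2
  set a : ℕ → (Fin n → ℝ) := fun k => lam k • x k with ha_def
  set b : ℕ → (Fin n → ℝ) := fun k => mu k • y k with hb_def
  have haK : ∀ k, a k ∈ K := fun k => hKcone _ (hxK k) _ (hlam k)
  have hbK : ∀ k, b k ∈ K := fun k => hKcone _ (hyK k) _ (hmu k)
  have hab : ∀ k, a k + b k = p k := fun k => hpk k
  -- bound on p
  obtain ⟨Cb, hCb⟩ : ∃ Cb, ∀ k, ‖p k‖ ≤ Cb := by
    obtain ⟨r, hr⟩ := (isBounded_range_of_tendsto p hz).subset_closedBall 0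
    exact ⟨r, fun k => by
      have := hr (mem_range_self k); rwa [mem_closedBall, dist_zero_right] at this⟩
  obtain ⟨R₁, hR₁⟩ := aux_bounded hKclosed hKcone hKpointed a b haK hbK Cb
    (fun k => by rw [hab k]; exact hCb k)
  obtain ⟨R₂, hR₂⟩ := aux_bounded hKclosed hKcone hKpointed b a hbK haK Cb
    (fun k => by rw [add_comm, hab k]; exact hCb k)
  -- bundle and extract a convergent subsequence
  set w : ℕ → ℝ × (Fin n → ℝ) × (Fin n → ℝ) := fun k => (lam k, a k, b k) with hw_def
  have hwmem : ∀ k, w k ∈ (Icc (0:ℝ) 1) ×ˢ (closedBall 0 R₁ ×ˢ closedBall 0 R₂) := by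
    intro k
    refine ⟨⟨hlam k, ?_⟩, ?_, ?_⟩
    · have := hmu k; linarith [hlm k]
    · rw [mem_closedBall, dist_zero_right]; exact hR₁ k
    · rw [mem_closedBall, dist_zero_right]; exact hR₂ k
  have hwbdd : IsBounded ((Icc (0:ℝ) 1) ×ˢ (closedBall (0 : Fin n → ℝ) R₁ ×ˢ
      closedBall (0 : Fin n → ℝ) R₂)) :=
    (isBounded_Icc 0 1).prod ((isBounded_closedBall).prod isBounded_closedBall)
  obtain ⟨L, hL, φ, hφ, hwφ⟩ := tendsto_subseq_of_bounded hwbdd hwmem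
  rw [(isClosed_Icc.prod (IsClosed.prod isClosed_closedBall isClosed_closedBall)).closure_eq] at hL
  obtain ⟨l, u, v⟩ := L
  have hl0 : (0:ℝ) ≤ l := hL.1.1
  have hl1 : l ≤ 1 := hL.1.2
  clear hL
  -- component limits
  have hlamt : Tendsto (fun k => lam (φ k)) atTop (𝓝 l) :=
    (continuous_fst.tendsto _).comp hwφ
  have hat : Tendsto (fun k => a (φ k)) atTop (𝓝 u) :=
    ((continuous_fst.comp continuous_snd).tendsto _).comp hwφ
  have hbt : Tendsto (fun k => b (φ k)) atTop (𝓝 v) :=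
    ((continuous_snd.comp continuous_snd).tendsto _).comp hwφ
  have huK : u ∈ K := hKclosed.mem_of_tendsto hat (Eventually.of_forall fun k => haK _)
  have hvK : v ∈ K := hKclosed.mem_of_tendsto hbt (Eventually.of_forall fun k => hbK _)
  have huv : u + v = z := by
    refine tendsto_nhds_unique ?_ (hz.comp hφ.tendsto_atTop)
    have heq : p ∘ φ = fun k => a (φ k) + b (φ k) := by
      funext k; exact (hab _).symm
    rw [heq]
    exact hat.add hbt
  -- case analysis on l
  rcases eq_or_lt_of_le hl0 with h0 | h0
  · -- l = 0 : z = v + u with v ∈ C₂ and dot c₁ u ≥ 0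
    have hmut : Tendsto (fun k => mu (φ k)) atTop (𝓝 1) := by
      have : (fun k => mu (φ k)) = fun k => 1 - lam (φ k) := by
        funext k; linarith [hlm (φ k)]
      rw [this]
      have := (tendsto_const_nhds (x := (1:ℝ)) (f := atTop (α := ℕ))).sub hlamt
      rw [← h0] at this
      simpa using this
    have hvC₂ : v ∈ C₂ := by
      have hev : ∀ᶠ k in atTop, (1:ℝ)/2 < mu (φ k) :=
        hmut.eventually (eventually_gt_nhds (by norm_num))
      have ht : Tendsto (fun k => (mu (φ k))⁻¹ • b (φ k)) atTop (𝓝 v) := by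
        have := (hmut.inv₀ one_ne_zero).smul hbt
        simpa using this
      refine hC₂closed.mem_of_tendsto ht (hev.mono fun k hk => ?_)
      have hmupos : mu (φ k) ≠ 0 := by linarith
      rw [hb_def]
      simp only [smul_smul, inv_mul_cancel₀ hmupos, one_smul]
      exact hyC _
    have hdotu : 0 ≤ dot c₁ u := by
      have hle : ∀ k, lam (φ k) * c₁₀ ≤ dot c₁ (a (φ k)) := fun k => by
        rw [ha_def]
        simp only []
        rw [dot_smul_right]
        exact mul_le_mul_of_nonneg_left (hxdot _) (hlam _)
      have t1 : Tendsto (fun k => lam (φ k) * c₁₀) atTop (𝓝 (l * c₁₀)) :=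
        hlamt.mul_const c₁₀
      have t2 : Tendsto (fun k => dot c₁ (a (φ k))) atTop (𝓝 (dot c₁ u)) :=
        ((dot_continuous c₁).tendsto u).comp hat
      have := le_of_tendsto_of_tendsto' t1 t2 hle
      rw [← h0] at this
      simpa using this
    have hz' : z = v + u := by rw [← huv]; abel
    rw [hz']
    exact aux_key hKconv hKcone c₁ c₂ c₁₀ c₂₀ C₁ C₂ hC₁ hC₂ β₁ hdual₁ hvC₂ huK hdotu
  rcases eq_or_lt_of_le hl1 with h1 | h1
  · -- l = 1 : z = u + v with u ∈ C₁ and dot c₂ v ≥ 0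
    have huC₁ : u ∈ C₁ := by
      have hev : ∀ᶠ k in atTop, (1:ℝ)/2 < lam (φ k) :=
        hlamt.eventually (eventually_gt_nhds (by rw [h1]; norm_num))
      have ht : Tendsto (fun k => (lam (φ k))⁻¹ • a (φ k)) atTop (𝓝 u) := by
        have := (hlamt.inv₀ (by rw [h1]; norm_num : l ≠ 0)).smul hat
        rw [h1] at this
        simpa using this
      refine hC₁closed.mem_of_tendsto ht (hev.mono fun k hk => ?_)
      have hlampos : lam (φ k) ≠ 0 := by linarith
      rw [ha_def]
      simp only [smul_smul, inv_mul_cancel₀ hlampos, one_smul]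
      exact hxC _
    have hdotv : 0 ≤ dot c₂ v := by
      have hle : ∀ k, mu (φ k) * c₂₀ ≤ dot c₂ (b (φ k)) := fun k => by
        rw [hb_def]
        simp only []
        rw [dot_smul_right]
        exact mul_le_mul_of_nonneg_left (hydot _) (hmu _)
      have hmut : Tendsto (fun k => mu (φ k)) atTop (𝓝 (1 - l)) := by
        have : (fun k => mu (φ k)) = fun k => 1 - lam (φ k) := by
          funext k; linarith [hlm (φ k)]
        rw [this]
        exact (tendsto_const_nhds (x := (1:ℝ)) (f := atTop (α := ℕ))).sub hlamt
      have t1 : Tendsto (fun k => mu (φ k) * c₂₀) atTop (𝓝 ((1 - l) * c₂₀)) :=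
        hmut.mul_const c₂₀
      have t2 : Tendsto (fun k => dot c₂ (b (φ k))) atTop (𝓝 (dot c₂ v)) :=
        ((dot_continuous c₂).tendsto v).comp hbt
      have := le_of_tendsto_of_tendsto' t1 t2 hle
      rw [h1] at this
      simpa using this
    have hz' : z = u + v := by rw [← huv]
    rw [hz', union_comm]
    exact aux_key hKconv hKcone c₂ c₁ c₂₀ c₁₀ C₂ C₁ hC₂ hC₁ β₂ hdual₂ huC₁ hvK hdotv
  · -- 0 < l < 1
    have hl : 0 < l := h0
    have hl' : 0 < 1 - l := by linarith
    have huC₁ : (l⁻¹ • u) ∈ C₁ := by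
      have hev : ∀ᶠ k in atTop, l/2 < lam (φ k) :=
        hlamt.eventually (eventually_gt_nhds (by linarith))
      have ht : Tendsto (fun k => (lam (φ k))⁻¹ • a (φ k)) atTop (𝓝 (l⁻¹ • u)) :=
        (hlamt.inv₀ (ne_of_gt hl)).smul hat
      refine hC₁closed.mem_of_tendsto ht (hev.mono fun k hk => ?_)
      have hlampos : lam (φ k) ≠ 0 := by nlinarith
      rw [ha_def]
      simp only [smul_smul, inv_mul_cancel₀ hlampos, one_smul]
      exact hxC _
    have hvC₂ : ((1 - l)⁻¹ • v) ∈ C₂ := by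
      have hmut : Tendsto (fun k => mu (φ k)) atTop (𝓝 (1 - l)) := by
        have : (fun k => mu (φ k)) = fun k => 1 - lam (φ k) := by
          funext k; linarith [hlm (φ k)]
        rw [this]
        exact (tendsto_const_nhds (x := (1:ℝ)) (f := atTop (α := ℕ))).sub hlamt
      have hev : ∀ᶠ k in atTop, (1 - l)/2 < mu (φ k) :=
        hmut.eventually (eventually_gt_nhds (by linarith))
      have ht : Tendsto (fun k => (mu (φ k))⁻¹ • b (φ k)) atTop (𝓝 ((1 - l)⁻¹ • v)) :=
        (hmut.inv₀ (ne_of_gt hl')).smul hbt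
      refine hC₂closed.mem_of_tendsto ht (hev.mono fun k hk => ?_)
      have hmupos : mu (φ k) ≠ 0 := by nlinarith
      rw [hb_def]
      simp only [smul_smul, inv_mul_cancel₀ hmupos, one_smul]
      exact hyC _
    have hz' : z = l • (l⁻¹ • u) + (1 - l) • ((1 - l)⁻¹ • v) := by
      rw [smul_smul, smul_smul, mul_inv_cancel₀ (ne_of_gt hl),
        mul_inv_cancel₀ (ne_of_gt hl'), one_smul, one_smul, huv]
    rw [hz']
    exact (convex_convexHull ℝ (C₁ ∪ C₂))
      (subset_convexHull ℝ _ (Or.inl huC₁))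
      (subset_convexHull ℝ _ (Or.inr hvC₂))
      (le_of_lt hl) (le_of_lt hl') (by ring)
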